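/- Under the construction of the MDP M_G from a DAG G, backward policy P_B, and GFlowNet reward R (rewards r(s,s') = log P_B(s|s') for non-terminal edges, r(x,s_f) = log R(x) for x ∈ X), for every state s ≠ s_f the optimal entropy-regularized (λ=1) value satisfies V*₁(s) = log F(s), and for every edge (s,s') with s' ≠ s_f the optimal soft Q-value satisfies Q*₁(s,s') = log F(s → s'), where F is the Markovian flow defined by P_B and R: F(x) = R(x) for x ∈ X, F(s → s') = P_B(s|s') F(s'), and F(s) = Σ_{s' child of s} F(s → s') for non-terminal s. -/
import Mathlib


/- Common setup: finite DAGs, policies, trajectories, GFlowNet notions. -/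

noncomputable section
open scoped Classical
open Finset Real

/-- A finite DAG with a distinguished initial state `s0`. Acyclicity is witnessed
by a rank function that strictly increases along edges. -/
structure FinDAG (S : Type) [Fintype S] where
  edge : S → S → Prop
  rank : S → ℕ
  rank_lt : ∀ ⦃s s'⦄, edge s s' → rank s < rank s'
  s0 : S

variable {S : Type} [Fintype S]

namespace FinDAG

/-- A state is terminal iff it has no outgoing edges. -/
def Terminal (G : FinDAG S) (s : S) : Prop := ∀ s', ¬ G.edge s s'

/-- The children of a state. -/
def children (G : FinDAG S) (s : S) : Finset S := Finset.univ.filter fun s' => G.edge s s'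

/-- The parents of a state. -/
def parents (G : FinDAG S) (s' : S) : Finset S := Finset.univ.filter fun s => G.edge s s'

/-- The set of terminal states `X`. -/
def X (G : FinDAG S) : Finset S := Finset.univ.filter fun x => G.Terminal x

/-- `PB` is a (full-support) backward policy: positive exactly on edges, and for each
state with parents, the probabilities of its parents sum to one. -/
structure IsBackward (G : FinDAG S) (PB : S → S → ℝ) : Prop where
  pos : ∀ s s', G.edge s s' → 0 < PB s s'
  supp : ∀ s s', ¬ G.edge s s' → PB s s' = 0
  sum_one : ∀ s', (G.parents s').Nonempty → ∑ s ∈ G.parents s', PB s s' = 1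

/-- `PF` is a (full-support) forward policy: positive exactly on edges, and for each
non-terminal state the probabilities of its children sum to one. -/
structure IsForward (G : FinDAG S) (PF : S → S → ℝ) : Prop where
  pos : ∀ s s', G.edge s s' → 0 < PF s s'
  supp : ∀ s s', ¬ G.edge s s' → PF s s' = 0
  sum_one : ∀ s, ¬ G.Terminal s → ∑ s' ∈ G.children s, PF s s' = 1

/-- A complete trajectory: starts at `s0`, follows edges and ends in a terminal state. -/
def IsTraj (G : FinDAG S) (τ : List S) : Prop :=
  τ.head? = some G.s0 ∧ τ.Chain' G.edge ∧ G.Terminal (τ.getLastD G.s0)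

/-- The terminal state `x_τ` reached by a trajectory. -/
def lastState (G : FinDAG S) (τ : List S) : S := τ.getLastD G.s0

/-- A Markovian flow `F` induced by the backward policy `PB` and reward `R`:
`F(x) = R(x)` on terminal states, and `F(s) = ∑_{s'} P_B(s|s') F(s')`
(the edge flow being `F(s→s') = P_B(s|s') F(s')`). -/
def IsFlow (G : FinDAG S) (PB : S → S → ℝ) (R : S → ℝ) (F : S → ℝ) : Prop :=
  (∀ x, G.Terminal x → F x = R x) ∧
  (∀ s, ¬ G.Terminal s → F s = ∑ s' ∈ G.children s, PB s s' * F s')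

/-- `V` solves the soft Bellman optimality equations (λ = 1) of the MDP `M_G`
with rewards `r(s,s') = log P_B(s|s')` on interior edges and `log R(x)` at the
terminal transition `x → s_f` (so `V(x) = log R(x)`). -/
def IsSoftValue (G : FinDAG S) (PB : S → S → ℝ) (R : S → ℝ) (V : S → ℝ) : Prop :=
  (∀ x, G.Terminal x → V x = Real.log (R x)) ∧
  (∀ s, ¬ G.Terminal s →
    V s = Real.log (∑ s' ∈ G.children s, Real.exp (Real.log (PB s s') + V s')))

/-- The softmax-optimal policy `π*(s'|s) = exp(r(s,s') + V(s') − V(s))`. -/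
def softOpt (G : FinDAG S) (PB : S → S → ℝ) (V : S → ℝ) (s s' : S) : ℝ :=
  if G.edge s s' then Real.exp (Real.log (PB s s') + V s' - V s) else 0

end FinDAG

/-- Product of `f` over consecutive pairs of the list `τ`. -/
def pathProd (f : S → S → ℝ) (τ : List S) : ℝ :=
  ((τ.zip τ.tail).map fun p => f p.1 p.2).prod

/-- Sum of `f` over consecutive pairs of the list `τ`. -/
def pathSum (f : S → S → ℝ) (τ : List S) : ℝ :=
  ((τ.zip τ.tail).map fun p => f p.1 p.2).sum

/-- In `M_G`, the optimal soft value (λ = 1) equals the log-flow: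
`V*₁(s) = log F(s)` for every state `s ≠ s_f`, and the optimal soft Q-value on every
DAG edge equals the log edge-flow: `Q*₁(s,s') = r(s,s') + V*₁(s') = log F(s→s')`
where `F(s→s') = P_B(s|s') F(s')`. -/
theorem soft_value_is_log_flow
    {S : Type} [Fintype S] (G : FinDAG S) (PB : S → S → ℝ) (R : S → ℝ)
    (hPB : G.IsBackward PB) (hR : ∀ x, G.Terminal x → 0 < R x)
    (V : S → ℝ) (hV : G.IsSoftValue PB R V)
    (F : S → ℝ) (hF : G.IsFlow PB R F) :
    (∀ s : S, V s = Real.log (F s)) ∧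
    (∀ s s' : S, G.edge s s' →
      Real.log (PB s s') + V s' = Real.log (PB s s' * F s')) := by

  have key : ∀ s : S, 0 < F s ∧ V s = Real.log (F s) := by
    set N := Finset.univ.sup G.rank with hN
    have hrank : ∀ s : S, G.rank s ≤ N := fun s =>
      Finset.le_sup (Finset.mem_univ s)
    have main : ∀ m : ℕ, ∀ s : S, N - G.rank s < m → 0 < F s ∧ V s = Real.log (F s) := by
      intro m
      induction m with
      | zero => intro s hs; omega
      | succ m ih =>
        intro s hs
        by_cases ht : G.Terminal s
        · refine ⟨hF.1 s ht ▸ hR s ht, ?_⟩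
          rw [hF.1 s ht, hV.1 s ht]
        · have hchild : ∀ s' ∈ G.children s, 0 < F s' ∧ V s' = Real.log (F s') := by
            intro s' hs'
            have he : G.edge s s' := (Finset.mem_filter.mp hs').2
            have h1 : G.rank s < G.rank s' := G.rank_lt he
            have := hrank s'
            exact ih s' (by omega)
          have hne : (G.children s).Nonempty := by
            simp only [FinDAG.Terminal, not_forall, not_not] at ht
            obtain ⟨s', hs'⟩ := ht
            exact ⟨s', Finset.mem_filter.mpr ⟨Finset.mem_univ _, hs'⟩⟩
          have hterm : ∀ s' ∈ G.children s,
              Real.exp (Real.log (PB s s') + V s') = PB s s' * F s' := by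
            intro s' hs'
            have he : G.edge s s' := (Finset.mem_filter.mp hs').2
            rw [(hchild s' hs').2, Real.exp_add, Real.exp_log (hPB.pos s s' he),
              Real.exp_log (hchild s' hs').1]
          have hFpos : 0 < F s := by
            rw [hF.2 s ht]
            apply Finset.sum_pos
            · intro s' hs'
              exact mul_pos (hPB.pos s s' (Finset.mem_filter.mp hs').2) (hchild s' hs').1
            · exact hne
          refine ⟨hFpos, ?_⟩
          rw [hV.2 s ht, Finset.sum_congr rfl hterm, ← hF.2 s ht]
    intro s
    exact main (N - G.rank s + 1) s (by omega)
  refine ⟨fun s => (key s).2, fun s s' he => ?_⟩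
  rw [(key s').2, Real.log_mul (ne_of_gt (hPB.pos s s' he)) (ne_of_gt (key s').1)]
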